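/- The two-qubit maximally entangled state |φ⁺⟩ = (|00⟩+|11⟩)/√2 does not satisfy Hardy's nonlocality: there are no projective measurements {E_x^a} for Alice and {F_y^b} for Bob on ℂ² such that the correlation h(a,b|x,y) = ⟨φ⁺| E_x^a ⊗ F_y^b |φ⁺⟩ satisfies h(0,0|0,0) > 0, h(0,1|0,1) = 0, h(1,0|1,0) = 0, h(0,0|1,1) = 0. -/

import Mathlib

open Kronecker

/-- The maximally entangled two-qubit state |φ⁺⟩ = (|00⟩+|11⟩)/√2, as a vector in ℂ²⊗ℂ². -/
noncomputable def phiPlus : Fin 2 × Fin 2 → ℂ :=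
  fun p => if p.1 = p.2 then (1 / Real.sqrt 2 : ℝ) else 0

/-- The correlation ⟨φ⁺| E ⊗ F |φ⁺⟩. -/
noncomputable def phiPlusCorr (E F : Matrix (Fin 2) (Fin 2) ℂ) : ℂ :=
  dotProduct (star phiPlus) ((E ⊗ₖ F).mulVec phiPlus)

/-- A pair of rank-one orthogonal projections on ℂ² summing to the identity. -/
def IsProjectivePair (P : Fin 2 → Matrix (Fin 2) (Fin 2) ℂ) : Prop :=
  (∀ a, (P a).IsHermitian) ∧ (∀ a, P a * P a = P a) ∧ (∀ a, (P a).rank = 1) ∧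
    P 0 + P 1 = 1

section
open Matrix

-- helper: tr(AᴴA)=0 → A=0
lemma zero_of_trace_conjT {A : Matrix (Fin 2) (Fin 2) ℂ}
    (h : (Aᴴ * A).trace = 0) : A = 0 := by
  have h2 : ∀ i j, A i j = 0 := by
    have hre : (∑ i, ∑ j, Complex.normSq (A j i)) = 0 := by
      have : (Aᴴ * A).trace = ∑ i, ∑ j, (Complex.normSq (A j i) : ℂ) := by
        simp [Matrix.trace, Matrix.mul_apply, Matrix.conjTranspose_apply, Matrix.diag,
          Complex.normSq_eq_conj_mul_self]
      rw [this] at h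
      exact_mod_cast h
    intro i j
    have := (Finset.sum_eq_zero_iff_of_nonneg (fun i _ => Finset.sum_nonneg
      (fun j _ => Complex.normSq_nonneg _))).mp hre j (Finset.mem_univ _)
    have := (Finset.sum_eq_zero_iff_of_nonneg (fun k _ => Complex.normSq_nonneg _)).mp this i
      (Finset.mem_univ _)
    exact Complex.normSq_eq_zero.mp this
  ext i j; exact h2 i j

lemma proj_mul_eq_zero {P Q : Matrix (Fin 2) (Fin 2) ℂ}
    (hP : P.IsHermitian) (hP2 : P * P = P) (hQ : Q.IsHermitian) (hQ2 : Q * Q = Q)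
    (h : (P * Q).trace = 0) : P * Q = 0 := by
  have hQPH : (Q * P)ᴴ = P * Q := by rw [conjTranspose_mul, hP.eq, hQ.eq]
  have e1 : P * Q * (Q * P) = P * Q * P := by
    rw [← mul_assoc, mul_assoc P Q Q, hQ2]
  have e2 : ((Q * P)ᴴ * (Q * P)).trace = 0 := by
    rw [hQPH, e1, trace_mul_cycle, hP2, h]
  have hQP : Q * P = 0 := zero_of_trace_conjT e2
  rw [← hQPH, hQP, conjTranspose_zero]

lemma proj_trace_eq_one {P : Matrix (Fin 2) (Fin 2) ℂ}
    (hP2 : P * P = P) (hr : P.rank = 1) : P.trace = 1 := by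
  have hdet : P.det = 0 := by
    by_contra hd
    have hu : IsUnit P := (Matrix.isUnit_iff_isUnit_det P).mpr (isUnit_iff_ne_zero.mpr hd)
    have := P.rank_of_isUnit hu
    rw [hr] at this
    simp at this
  have hP0 : P ≠ 0 := fun h => by simp [h, Matrix.rank_zero] at hr
  have hCH : P * P = P.trace • P - P.det • 1 := by
    ext i j
    fin_cases i <;> fin_cases j <;>
      simp [Matrix.mul_apply, Matrix.trace, Matrix.det_fin_two, Fin.sum_univ_two,
        Matrix.one_apply, Matrix.diag] <;> ring
  have h0 : (P.trace - 1) • P = 0 := by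
    rw [hP2, hdet, zero_smul, sub_zero] at hCH
    rw [sub_smul, one_smul, ← hCH, sub_self]
  rcases smul_eq_zero.mp h0 with h | h
  · exact sub_eq_zero.mp h
  · exact absurd h hP0

lemma proj_compl_of_mul_zero {P Q : Matrix (Fin 2) (Fin 2) ℂ}
    (hP : P.IsHermitian) (hP2 : P * P = P) (hrP : P.rank = 1)
    (hQ : Q.IsHermitian) (hQ2 : Q * Q = Q) (hrQ : Q.rank = 1)
    (h : P * Q = 0) : Q = 1 - P := by
  have hQP : Q * P = 0 := by
    have := congrArg conjTranspose h
    rwa [conjTranspose_mul, hP.eq, hQ.eq, conjTranspose_zero] at this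
  set S : Matrix (Fin 2) (Fin 2) ℂ := 1 - P - Q with hS
  have hSH : Sᴴ = S := by
    simp [hS, conjTranspose_sub, hP.eq, hQ.eq]
  have hS2 : S * S = S := by
    simp only [hS, sub_mul, mul_sub, mul_one, one_mul, hP2, hQ2, h, hQP]
    noncomm_ring
  have htr : (Sᴴ * S).trace = 0 := by
    rw [hSH, hS2, hS]
    simp [trace_sub, proj_trace_eq_one hP2 hrP, proj_trace_eq_one hQ2 hrQ,
      Matrix.trace_one]
    norm_num
  have := zero_of_trace_conjT htr
  rw [hS] at this
  linear_combination (norm := module) -this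

lemma corr_eq (E F : Matrix (Fin 2) (Fin 2) ℂ) :
    phiPlusCorr E F = (1 / 2 : ℂ) * (E * Fᵀ).trace := by
  have h2 : ((Real.sqrt 2 : ℝ) : ℂ) * ((Real.sqrt 2 : ℝ) : ℂ) = 2 := by
    rw [← Complex.ofReal_mul, Real.mul_self_sqrt (by norm_num)]
    norm_num
  simp only [phiPlusCorr, phiPlus, dotProduct, Matrix.mulVec, Matrix.trace,
    Matrix.mul_apply, Matrix.transpose_apply, Matrix.diag, Matrix.kroneckerMap_apply,
    Fintype.sum_prod_type, Fin.sum_univ_two, Pi.star_apply]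
  norm_num
  have h2' : (((Real.sqrt 2 : ℝ)) : ℂ)⁻¹ * (((Real.sqrt 2 : ℝ)) : ℂ)⁻¹ = 1 / 2 := by
    rw [← mul_inv, h2]; norm_num
  linear_combination (E 0 0 * F 0 0 + E 0 1 * F 0 1 + E 1 0 * F 1 0 + E 1 1 * F 1 1) * h2'

/-- the two-qubit maximally entangled state does not exhibit Hardy's
nonlocality: no local projective measurements yield a correlation satisfying
Hardy's conditions. -/
theorem phiPlus_no_hardy :
    ¬ ∃ (E F : Fin 2 → Fin 2 → Matrix (Fin 2) (Fin 2) ℂ),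
      (∀ x, IsProjectivePair (E x)) ∧ (∀ y, IsProjectivePair (F y)) ∧
      0 < (phiPlusCorr (E 0 0) (F 0 0)).re ∧
      phiPlusCorr (E 0 0) (F 1 1) = 0 ∧
      phiPlusCorr (E 1 1) (F 0 0) = 0 ∧
      phiPlusCorr (E 1 0) (F 1 0) = 0 := by
  rintro ⟨E, F, hE, hF, hpos, h01, h10, h11⟩
  set G : Fin 2 → Fin 2 → Matrix (Fin 2) (Fin 2) ℂ := fun y b => (F y b)ᵀ with hG
  -- properties of G
  have hGH : ∀ y b, (G y b).IsHermitian := fun y b => ((hF y).1 b).transpose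
  have hG2 : ∀ y b, G y b * G y b = G y b := fun y b => by
    simp only [hG, ← Matrix.transpose_mul, (hF y).2.1 b]
  have hGr : ∀ y b, (G y b).rank = 1 := fun y b => by
    simp only [hG, Matrix.rank_transpose, (hF y).2.2.1 b]
  have hGsum : ∀ y, G y 0 + G y 1 = 1 := fun y => by
    simp only [hG, ← Matrix.transpose_add, (hF y).2.2.2, Matrix.transpose_one]
  -- translate correlation hypotheses to trace conditions
  have tr_of : ∀ x a y b, phiPlusCorr (E x a) (F y b) = 0 →
      E x a * G y b = 0 := by
    intro x a y b h
    rw [corr_eq] at h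
    have htr : ((E x a) * (G y b)).trace = 0 := by
      rcases mul_eq_zero.mp h with h' | h'
      · norm_num at h'
      · exact h'
    exact proj_mul_eq_zero ((hE x).1 a) ((hE x).2.1 a) (hGH y b) (hG2 y b) htr
  have k11 : E 1 0 * G 1 0 = 0 := tr_of 1 0 1 0 h11
  have hG10 : G 1 0 = 1 - E 1 0 :=
    proj_compl_of_mul_zero ((hE 1).1 0) ((hE 1).2.1 0) ((hE 1).2.2.1 0)
      (hGH 1 0) (hG2 1 0) (hGr 1 0) k11
  have hE11 : E 1 1 = 1 - E 1 0 := by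
    have := (hE 1).2.2.2
    linear_combination (norm := module) this
  have hG11 : G 1 1 = E 1 0 := by
    have := hGsum 1
    rw [hG10] at this
    linear_combination (norm := module) this
  have k01 : E 0 0 * E 1 0 = 0 := by
    have := tr_of 0 0 1 1 h01
    rwa [hG11] at this
  have hE10 : E 1 0 = 1 - E 0 0 :=
    proj_compl_of_mul_zero ((hE 0).1 0) ((hE 0).2.1 0) ((hE 0).2.2.1 0)
      ((hE 1).1 0) ((hE 1).2.1 0) ((hE 1).2.2.1 0) k01
  have hE11' : E 1 1 = E 0 0 := by
    rw [hE11, hE10]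
    module
  have k10 : E 0 0 * G 0 0 = 0 := by
    have := tr_of 1 1 0 0 h10
    rwa [hE11'] at this
  have : phiPlusCorr (E 0 0) (F 0 0) = 0 := by
    rw [corr_eq]
    have : ((E 0 0) * (G 0 0)).trace = 0 := by rw [k10, Matrix.trace_zero]
    rw [show (F 0 0)ᵀ = G 0 0 from rfl, this, mul_zero]
  rw [this] at hpos
  simp at hpos

end
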